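/- If a₁ > 1/9, then s_n ≠ 0 (hence all σ_i are strictly positive, so the smallest index m with s_{n−m} ≠ 0 is m = 1) and the smallest value satisfies σ_n > 1/(10 g_1). -/
import Mathlib


noncomputable section

/-- The `k`-th elementary symmetric function of `σ₁, …, σ_n` (with value `1` for `k = 0`).
(Ratios with zero denominator are interpreted as `0`, which is Lean's convention.) -/
def esym (n : ℕ) (σ : Fin n → ℝ) (k : ℕ) : ℝ :=
  ∑ t ∈ Finset.univ.powersetCard k, ∏ i ∈ t, σ i

/-- `b_k = sup_{0 ≤ i ≤ k−1} (s_{n−i}/s_{n−k})^{1/(k−i)}`. -/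
def bq (n : ℕ) (σ : Fin n → ℝ) (k : ℕ) : ℝ :=
  ⨆ i : Fin k, (esym n σ (n - (i : ℕ)) / esym n σ (n - k)) ^ ((1 : ℝ) / ((k : ℝ) - (i : ℕ)))

/-- `g_k = sup_{k+1 ≤ i ≤ n} (s_{n−i}/s_{n−k})^{1/(i−k)}` for `k < n`, and `g_n = 1`. -/
def gq (n : ℕ) (σ : Fin n → ℝ) (k : ℕ) : ℝ :=
  if k = n then 1
  else ⨆ j : Fin (n - k),
    (esym n σ (n - (k + 1 + (j : ℕ))) / esym n σ (n - k)) ^ ((1 : ℝ) / ((j : ℕ) + 1))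

/-- `a_k = b_k · g_k`. -/
def aq (n : ℕ) (σ : Fin n → ℝ) (k : ℕ) : ℝ := bq n σ k * gq n σ k

lemma esym_nonneg (n : ℕ) (σ : Fin n → ℝ) (h : ∀ i, 0 ≤ σ i) (k : ℕ) : 0 ≤ esym n σ k :=
  Finset.sum_nonneg fun t _ => Finset.prod_nonneg fun i _ => h i

lemma esym_top (n : ℕ) (σ : Fin n → ℝ) : esym n σ n = ∏ i, σ i := by
  have h : (Finset.univ : Finset (Fin n)).powersetCard n = {Finset.univ} := by
    have h := Finset.powersetCard_self (Finset.univ : Finset (Fin n))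
    rwa [Finset.card_fin] at h
  simp [esym, h]

lemma bq_one (n : ℕ) (σ : Fin n → ℝ) : bq n σ 1 = esym n σ n / esym n σ (n - 1) := by
  rw [bq, ciSup_unique]
  norm_num

lemma gq_one_nonneg (n : ℕ) (σ : Fin n → ℝ) (h : ∀ i, 0 ≤ σ i) : 0 ≤ gq n σ 1 := by
  rw [gq]
  split
  · norm_num
  · exact Real.iSup_nonneg fun j => Real.rpow_nonneg
      (div_nonneg (esym_nonneg n σ h _) (esym_nonneg n σ h _)) _

/-- If `a₁ > 1/9`, then `s_n ≠ 0` (hence all `σ_i` are strictly positive, so the smallest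
index `m` with `s_{n−m} ≠ 0` is `m = 1`), and the smallest singular value satisfies
`σ_n > 1/(10·g₁)`. -/
theorem stmt3 (n : ℕ) (hn : 1 ≤ n) (σ : Fin n → ℝ)
    (hdec : Antitone σ) (hnonneg : ∀ i, 0 ≤ σ i)
    (ha : 1 / 9 < aq n σ 1) :
    esym n σ n ≠ 0 ∧ (∀ i, 0 < σ i) ∧
      1 / (10 * gq n σ 1) < σ ⟨n - 1, by omega⟩ := by
  rw [aq, bq_one] at ha
  set sN := esym n σ n with hsN
  set sN1 := esym n σ (n - 1) with hsN1
  have hsNnn : 0 ≤ sN := esym_nonneg n σ hnonneg n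
  have hsN1nn : 0 ≤ sN1 := esym_nonneg n σ hnonneg (n - 1)
  have hgnn : 0 ≤ gq n σ 1 := gq_one_nonneg n σ hnonneg
  -- positivity of the pieces
  have hbnn : 0 ≤ sN / sN1 := div_nonneg hsNnn hsN1nn
  have hprod : 0 < sN / sN1 * gq n σ 1 := lt_trans (by norm_num) ha
  have hbpos : 0 < sN / sN1 := by
    rcases hbnn.lt_or_eq with h | h
    · exact h
    · rw [← h] at hprod; simp at hprod
  have hgpos : 0 < gq n σ 1 := by
    rcases hgnn.lt_or_eq with h | h
    · exact h
    · rw [← h] at hprod; simp at hprod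
  have hsN1pos : 0 < sN1 := by
    rcases hsN1nn.lt_or_eq with h | h
    · exact h
    · rw [← h, div_zero] at hbpos; exact absurd hbpos (lt_irrefl 0)
  have hsNpos : 0 < sN := by
    have := mul_pos hbpos hsN1pos
    rwa [div_mul_cancel₀ _ hsN1pos.ne'] at this
  have hprodpos : 0 < ∏ i, σ i := by rwa [hsN, esym_top] at hsNpos
  have hσpos : ∀ i, 0 < σ i := by
    intro i
    rcases (hnonneg i).lt_or_eq with h | h
    · exact h
    · exfalso
      have : (∏ j, σ j) = 0 := Finset.prod_eq_zero (Finset.mem_univ i) h.symm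
      rw [this] at hprodpos; exact lt_irrefl 0 hprodpos
  refine ⟨hsNpos.ne', hσpos, ?_⟩
  set m : Fin n := ⟨n - 1, by omega⟩ with hm
  -- s_{n-1} ≥ s_n / σ_m
  have hterm : (∏ i ∈ Finset.univ.erase m, σ i) ≤ sN1 := by
    have hmem : Finset.univ.erase m ∈ (Finset.univ : Finset (Fin n)).powersetCard (n - 1) := by
      rw [Finset.mem_powersetCard]
      exact ⟨Finset.subset_univ _, by
        rw [Finset.card_erase_of_mem (Finset.mem_univ m), Finset.card_fin]⟩
    exact Finset.single_le_sum (f := fun t => ∏ i ∈ t, σ i)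
      (fun t _ => Finset.prod_nonneg fun i _ => hnonneg i) hmem
  have hmul : σ m * (∏ i ∈ Finset.univ.erase m, σ i) = ∏ i, σ i :=
    Finset.mul_prod_erase Finset.univ σ (Finset.mem_univ m)
  have hσm : 0 < σ m := hσpos m
  -- σ m ≥ sN / sN1
  have hkey : sN / sN1 ≤ σ m := by
    rw [div_le_iff₀ hsN1pos]
    calc sN = ∏ i, σ i := by rw [hsN, esym_top]
    _ = σ m * ∏ i ∈ Finset.univ.erase m, σ i := hmul.symm
    _ ≤ σ m * sN1 := by
        exact mul_le_mul_of_nonneg_left hterm hσm.le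
  -- conclude
  rw [div_lt_iff₀ (by positivity)]
  have h1 : sN / sN1 * gq n σ 1 ≤ σ m * gq n σ 1 :=
    mul_le_mul_of_nonneg_right hkey hgnn
  nlinarith
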